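/- Let X : [0,T] → R^p be continuous, and suppose for each j ∈ {1,...,p} there is a nondegenerate subinterval [t_{j1}, t_{j2}] ⊆ [0,T] with t_{j1} < t_{j2} on which |X^j(t)| - Σ_{i ≠ j} |X^i(t)| > ε for a fixed ε ∈ (0,1). Then the matrix S̄_T = ∫_0^T X(t)X(t)^T dt is positive definite. -/

import Mathlib

open Matrix MeasureTheory Finset

/-- Lemma 2 (paper): if the continuous function `X : [0,T] → ℝᵖ` is, for each index `j`,
`ε`-diagonally dominant in its `j`-th component on some nondegenerate subinterval
`[t_{j1}, t_{j2}] ⊆ [0,T]`, then `S̄_T = ∫_0^T X(t) X(t)ᵀ dt` is positive definite. -/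
theorem stmt6 {p : ℕ} (T ε : ℝ) (hT : 0 < T) (hε0 : 0 < ε) (hε1 : ε < 1)
    (X : ℝ → Fin p → ℝ) (hX : ContinuousOn X (Set.Icc 0 T))
    (t1 t2 : Fin p → ℝ)
    (hsub : ∀ j, 0 ≤ t1 j ∧ t1 j < t2 j ∧ t2 j ≤ T)
    (hdom : ∀ j, ∀ t ∈ Set.Icc (t1 j) (t2 j),
      ε < |X t j| - ∑ i ∈ univ.erase j, |X t i|)
    (Sbar : Matrix (Fin p) (Fin p) ℝ)
    (hSbar : ∀ i j, Sbar i j = ∫ t in (0 : ℝ)..T, X t i * X t j) :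
    ∀ v : Fin p → ℝ, v ≠ 0 → 0 < v ⬝ᵥ (Sbar *ᵥ v) := by
  intro v hv
  set g : ℝ → ℝ := fun t => ∑ j, X t j * v j with hgdef
  have hXc : ∀ i, ContinuousOn (fun t => X t i) (Set.Icc 0 T) :=
    fun i => (continuous_apply i).comp_continuousOn hX
  have hgc : ContinuousOn g (Set.Icc 0 T) := by
    apply continuousOn_finset_sum
    intro j _
    exact (hXc j).mul continuousOn_const
  have hgsqc : ContinuousOn (fun t => g t ^ 2) (Set.Icc 0 T) := hgc.pow 2
  have huIcc : Set.uIcc (0 : ℝ) T = Set.Icc 0 T := Set.uIcc_of_le hT.le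
  have hint : ∀ i j : Fin p, IntervalIntegrable (fun t => X t i * X t j) volume 0 T := by
    intro i j
    apply ContinuousOn.intervalIntegrable
    rw [huIcc]
    exact (hXc i).mul (hXc j)
  have hintc : ∀ i j : Fin p,
      IntervalIntegrable (fun t => v i * (X t i * X t j * v j)) volume 0 T := by
    intro i j
    have := ((hint i j).const_mul (v i)).mul_const (v j)
    simpa [mul_assoc] using this
  -- quadratic form equals integral of g^2
  have key : v ⬝ᵥ (Sbar *ᵥ v) = ∫ t in (0 : ℝ)..T, g t ^ 2 := by
    have : ∀ i j : Fin p, v i * (Sbar i j * v j)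
        = ∫ t in (0 : ℝ)..T, v i * (X t i * X t j * v j) := by
      intro i j
      rw [hSbar, ← intervalIntegral.integral_mul_const, ← intervalIntegral.integral_const_mul]
    simp only [dotProduct, mulVec, dotProduct, Finset.mul_sum, this]
    have hswap1 : ∀ i : Fin p, ∑ j, ∫ t in (0:ℝ)..T, v i * (X t i * X t j * v j)
        = ∫ t in (0:ℝ)..T, ∑ j, v i * (X t i * X t j * v j) :=
      fun i => (intervalIntegral.integral_finset_sum (fun j _ => hintc i j)).symm
    simp only [hswap1]
    rw [← intervalIntegral.integral_finset_sum]
    · apply intervalIntegral.integral_congr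
      intro t _
      simp only [hgdef, pow_two, Finset.sum_mul_sum]
      apply Finset.sum_congr rfl; intro i _
      apply Finset.sum_congr rfl; intro j _
      ring
    · intro i _
      have := IntervalIntegrable.sum (μ := volume) (a := (0:ℝ)) (b := T) univ
        (f := fun j t => v i * (X t i * X t j * v j)) (fun j _ => hintc i j)
      have heq : (fun t => ∑ j : Fin p, v i * (X t i * X t j * v j))
          = ∑ j : Fin p, fun t => v i * (X t i * X t j * v j) := by
        ext t; simp
      rw [heq]; exact this
  rw [key]
  -- pick index with maximal |v i|
  obtain ⟨j0, hj0⟩ := Function.ne_iff.mp hv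
  obtain ⟨i, -, hi⟩ := Finset.exists_max_image univ (fun j => |v j|) ⟨j0, mem_univ j0⟩
  have hvi : 0 < |v i| :=
    lt_of_lt_of_le (abs_pos.mpr hj0) (hi j0 (mem_univ j0))
  obtain ⟨ha0, hab, hbT⟩ := hsub i
  set a := t1 i
  set b := t2 i
  have hsubI : Set.Icc a b ⊆ Set.Icc 0 T :=
    Set.Icc_subset_Icc ha0 hbT
  -- pointwise bound on [a,b]
  have hpt : ∀ t ∈ Set.Icc a b, (ε * |v i|) ^ 2 ≤ g t ^ 2 := by
    intro t ht
    have hd := hdom i t ht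
    have h1 : g t = X t i * v i + ∑ j ∈ univ.erase i, X t j * v j := by
      rw [hgdef]; exact (Finset.add_sum_erase univ (fun j => X t j * v j) (mem_univ i)).symm
    have h2 : |∑ j ∈ univ.erase i, X t j * v j| ≤ (∑ j ∈ univ.erase i, |X t j|) * |v i| := by
      calc |∑ j ∈ univ.erase i, X t j * v j| ≤ ∑ j ∈ univ.erase i, |X t j * v j| :=
            Finset.abs_sum_le_sum_abs _ _
        _ ≤ ∑ j ∈ univ.erase i, |X t j| * |v i| := by
            apply Finset.sum_le_sum
            intro j hj
            rw [abs_mul]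
            exact mul_le_mul_of_nonneg_left (hi j (mem_univ j)) (abs_nonneg _)
        _ = (∑ j ∈ univ.erase i, |X t j|) * |v i| := by rw [Finset.sum_mul]
    have h3 : ε * |v i| ≤ |g t| := by
      have htri : |X t i * v i| - |∑ j ∈ univ.erase i, X t j * v j| ≤ |g t| := by
        have h := abs_sub_abs_le_abs_sub (X t i * v i) (-(∑ j ∈ univ.erase i, X t j * v j))
        rw [abs_neg, sub_neg_eq_add, ← h1] at h
        exact h
      have h4 : |X t i * v i| - (∑ j ∈ univ.erase i, |X t j|) * |v i| ≤ |g t| := by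
        linarith
      calc ε * |v i| ≤ (|X t i| - ∑ j ∈ univ.erase i, |X t j|) * |v i| :=
            mul_le_mul_of_nonneg_right hd.le (abs_nonneg _)
        _ = |X t i * v i| - (∑ j ∈ univ.erase i, |X t j|) * |v i| := by
            rw [abs_mul]; ring
        _ ≤ |g t| := h4
    calc (ε * |v i|) ^ 2 ≤ |g t| ^ 2 := by
          apply pow_le_pow_left₀ (by positivity) h3
      _ = g t ^ 2 := sq_abs _
  -- split integral
  have hg2int : ∀ c d : ℝ, c ∈ Set.Icc (0:ℝ) T → d ∈ Set.Icc (0:ℝ) T →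
      IntervalIntegrable (fun t => g t ^ 2) volume c d := by
    intro c d hc hd
    apply ContinuousOn.intervalIntegrable
    exact hgsqc.mono (Set.uIcc_subset_Icc hc hd)
  have haI : a ∈ Set.Icc (0:ℝ) T := ⟨ha0, le_trans hab.le hbT⟩
  have hbI : b ∈ Set.Icc (0:ℝ) T := ⟨le_trans ha0 hab.le, hbT⟩
  have h0I : (0:ℝ) ∈ Set.Icc (0:ℝ) T := ⟨le_refl _, hT.le⟩
  have hTI : T ∈ Set.Icc (0:ℝ) T := ⟨hT.le, le_refl _⟩
  have hsplit : ∫ t in (0:ℝ)..T, g t ^ 2 =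
      (∫ t in (0:ℝ)..a, g t ^ 2) + (∫ t in a..b, g t ^ 2) + (∫ t in b..T, g t ^ 2) := by
    rw [intervalIntegral.integral_add_adjacent_intervals (hg2int 0 a h0I haI)
      (hg2int a b haI hbI),
      intervalIntegral.integral_add_adjacent_intervals (hg2int 0 b h0I hbI)
      (hg2int b T hbI hTI)]
  have hnn1 : 0 ≤ ∫ t in (0:ℝ)..a, g t ^ 2 :=
    intervalIntegral.integral_nonneg ha0 (fun t _ => sq_nonneg _)
  have hnn3 : 0 ≤ ∫ t in b..T, g t ^ 2 :=
    intervalIntegral.integral_nonneg hbT (fun t _ => sq_nonneg _)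
  have hmid : (b - a) * (ε * |v i|) ^ 2 ≤ ∫ t in a..b, g t ^ 2 := by
    have := intervalIntegral.integral_mono_on hab.le
      (intervalIntegrable_const) (hg2int a b haI hbI) hpt
    simpa [intervalIntegral.integral_const, smul_eq_mul] using this
  have hpos : 0 < (b - a) * (ε * |v i|) ^ 2 := by
    apply mul_pos (by linarith) (by positivity)
  rw [hsplit]
  linarith
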